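/- Let {m_k} be the confluent Prony moments and let M_C = (m_{s+t})_{0≤s,t≤C−1} be the C×C Hankel matrix built from them. Then M_C is invertible if and only if the nodes ξ_1,…,ξ_n are pairwise distinct and all the highest magnitudes a_{i,l_i−1}, i = 1,…,n, are nonzero. -/

import Mathlib

open scoped BigOperators

noncomputable section

/-- The confluent Prony moments `m_k = Σ_i Σ_{j<l_i} a_{i,j} (k)_j ξ_i^{k-j}`,
where `(k)_j` is the falling factorial (so the term vanishes when `j > k`). -/
def pronyMoment {n : ℕ} (l : Fin n → ℕ) (ξ : Fin n → ℂ)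
    (a : (i : Fin n) → Fin (l i) → ℂ) (k : ℕ) : ℂ :=
  ∑ i, ∑ j : Fin (l i), a i j * (k.descFactorial j : ℂ) * ξ i ^ (k - (j : ℕ))

/-- Offset of the `i`-th block of columns: the sum of the multiplicities of all previous blocks. -/
def blockOff {n : ℕ} (L : Fin n → ℕ) (i : Fin n) : ℕ := ∑ i' ∈ Finset.Iio i, L i'

theorem blockOff_add_lt {n : ℕ} (L : Fin n → ℕ) (i : Fin n) {j : ℕ} (hj : j < L i) :
    blockOff L i + j < ∑ i', L i' := by
  have h1 : ∑ i' ∈ insert i (Finset.Iio i), L i' = ∑ i' ∈ Finset.Iio i, L i' + L i := by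
    rw [Finset.sum_insert (by simp)]; ring
  have h2 : ∑ i' ∈ insert i (Finset.Iio i), L i' ≤ ∑ i', L i' :=
    Finset.sum_le_sum_of_subset (Finset.subset_univ _)
  unfold blockOff
  omega

/-- The flattened index of position `j` inside block `i`, when block `i` has size `L i`. -/
def encC {n : ℕ} (L : Fin n → ℕ) (i : Fin n) (j : Fin (L i)) : Fin (∑ i', L i') :=
  ⟨blockOff L i + j, blockOff_add_lt L i j.isLt⟩

/-- The (square) confluent Vandermonde matrix on nodes `ξ_i` with multiplicities `L i`:
rows are indexed by `k = 0,…,(∑ L i)−1`; the entry in row `k` and column `j` of block `i`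
is `(k)_j ξ_i^{k−j}` (zero when `j > k`). -/
def confVand {n : ℕ} (L : Fin n → ℕ) (ξ : Fin n → ℂ) :
    Matrix (Fin (∑ i, L i)) (Fin (∑ i, L i)) ℂ :=
  fun k c => ∑ i, ∑ j : Fin (L i),
    if c = encC L i j then ((k : ℕ).descFactorial j : ℂ) * ξ i ^ ((k : ℕ) - (j : ℕ)) else 0

/-- The `l×l` magnitude block `B_i`: the `(s,t)` entry (0-based) is
`binom(s+t,s)·a_{s+t}` when `s+t ≤ l−1`, and `0` otherwise. -/
def magBlock (l : ℕ) (a : Fin l → ℂ) : Matrix (Fin l) (Fin l) ℂ :=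
  fun s t =>
    if h : (s : ℕ) + (t : ℕ) ≤ l - 1 then
      (((s : ℕ) + (t : ℕ)).choose (s : ℕ) : ℂ) *
        a ⟨(s : ℕ) + (t : ℕ), by have := s.isLt; omega⟩
    else 0

/-- The block-diagonal magnitude matrix `B = diag(B_1,…,B_n)`. -/
def magBlockMat {n : ℕ} (l : Fin n → ℕ) (a : (i : Fin n) → Fin (l i) → ℂ) :
    Matrix (Fin (∑ i, l i)) (Fin (∑ i, l i)) ℂ :=
  fun r c => ∑ i, ∑ s : Fin (l i), ∑ t : Fin (l i),
    if r = encC l i s ∧ c = encC l i t then magBlock (l i) (a i) s t else 0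

/-- The `C×C` Hankel matrix of the confluent Prony moments. -/
def pronyHankel {n : ℕ} (l : Fin n → ℕ) (ξ : Fin n → ℂ)
    (a : (i : Fin n) → Fin (l i) → ℂ) :
    Matrix (Fin (∑ i, l i)) (Fin (∑ i, l i)) ℂ :=
  fun s t => pronyMoment l ξ a ((s : ℕ) + (t : ℕ))

/-! ### Auxiliary development -/

namespace PronyAux

open Matrix Polynomial Finset

variable {n : ℕ} (L : Fin n → ℕ)

lemma blockOff_add_le {i i' : Fin n} (h : i < i') : blockOff L i + L i ≤ blockOff L i' := by
  have hsub : insert i (Finset.Iio i) ⊆ Finset.Iio i' := by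
    intro x hx
    simp only [Finset.mem_insert, Finset.mem_Iio] at *
    rcases hx with rfl | hx
    · exact h
    · exact hx.trans h
  have h2 := Finset.sum_le_sum_of_subset (f := L) hsub
  rw [Finset.sum_insert (by simp)] at h2
  unfold blockOff
  omega

/-- The encoding of a sigma pair as a flat index. -/
def sigEnc : ((i : Fin n) × Fin (L i)) → Fin (∑ i, L i) := fun p => encC L p.1 p.2

lemma sigEnc_injective : Function.Injective (sigEnc L) := by
  rintro ⟨i, j⟩ ⟨i', j'⟩ h
  have hval : blockOff L i + (j : ℕ) = blockOff L i' + (j' : ℕ) := congrArg Fin.val h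
  have hii : i = i' := by
    by_contra hne
    rcases lt_or_gt_of_ne hne with hlt | hlt
    · have := blockOff_add_le L hlt
      have := j.isLt
      omega
    · have := blockOff_add_le L hlt
      have := j'.isLt
      omega
  subst hii
  obtain rfl : j = j' := Fin.ext (by omega)
  rfl

/-- The equivalence between the sigma index set and the flat index set. -/
def sigEquiv : ((i : Fin n) × Fin (L i)) ≃ Fin (∑ i, L i) :=
  Equiv.ofBijective (sigEnc L)
    ((Fintype.bijective_iff_injective_and_card _).mpr ⟨sigEnc_injective L, by simp⟩)

@[simp] lemma sigEquiv_apply (p : (i : Fin n) × Fin (L i)) :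
    sigEquiv L p = encC L p.1 p.2 := rfl

lemma encC_eq_iff {i : Fin n} {j : Fin (L i)} {c : Fin (∑ i, L i)} :
    c = encC L i j ↔ (sigEquiv L).symm c = ⟨i, j⟩ := by
  rw [Equiv.symm_apply_eq]
  exact Iff.rfl

/-- The confluent Vandermonde matrix with sigma-typed columns. -/
def Vs (ξ : Fin n → ℂ) : Matrix (Fin (∑ i, L i)) ((i : Fin n) × Fin (L i)) ℂ :=
  fun k p => (((k : ℕ)).descFactorial (p.2 : ℕ) : ℂ) * ξ p.1 ^ ((k : ℕ) - (p.2 : ℕ))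

lemma confVand_eq (ξ : Fin n → ℂ) :
    confVand L ξ = (Vs L ξ).submatrix id (sigEquiv L).symm := by
  funext k c
  show (∑ i, ∑ j : Fin (L i),
      if c = encC L i j then ((k : ℕ).descFactorial j : ℂ) * ξ i ^ ((k : ℕ) - (j : ℕ)) else 0) = _
  rw [Finset.sum_sigma', Finset.univ_sigma_univ]
  have : ∀ p : (i : Fin n) × Fin (L i),
      (if c = encC L p.1 p.2 then ((k : ℕ).descFactorial p.2 : ℂ) * ξ p.1 ^ ((k : ℕ) - (p.2 : ℕ)) else 0)
      = if (sigEquiv L).symm c = p then Vs L ξ k p else 0 := by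
    intro p
    exact if_congr (encC_eq_iff L) rfl rfl
  rw [Finset.sum_congr rfl fun p _ => this p, Finset.sum_ite_eq]
  simp [Matrix.submatrix]

/-- The block-diagonal magnitude matrix with sigma-typed indices. -/
def Bs (a : (i : Fin n) → Fin (L i) → ℂ) :
    Matrix ((i : Fin n) × Fin (L i)) ((i : Fin n) × Fin (L i)) ℂ :=
  Matrix.blockDiagonal' (fun i => magBlock (L i) (a i))

lemma magBlockMat_eq (a : (i : Fin n) → Fin (L i) → ℂ) :
    magBlockMat L a = (Bs L a).submatrix (sigEquiv L).symm (sigEquiv L).symm := by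
  funext r c
  show (∑ i, ∑ s : Fin (L i), ∑ t : Fin (L i),
      if r = encC L i s ∧ c = encC L i t then magBlock (L i) (a i) s t else 0) = _
  have step1 : ∀ (i : Fin n) (s : Fin (L i)),
      (∑ t : Fin (L i), if r = encC L i s ∧ c = encC L i t then magBlock (L i) (a i) s t else 0)
      = if (sigEquiv L).symm r = ⟨i, s⟩ then
          (∑ t : Fin (L i), if c = encC L i t then magBlock (L i) (a i) s t else 0) else 0 := by
    intro i s
    by_cases h : (sigEquiv L).symm r = (⟨i, s⟩ : (i : Fin n) × Fin (L i))
    · rw [if_pos h]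
      refine Finset.sum_congr rfl fun t _ => ?_
      rw [← encC_eq_iff] at h
      simp [h]
    · rw [if_neg h]
      refine Finset.sum_eq_zero fun t _ => ?_
      rw [if_neg]
      rw [← encC_eq_iff] at h
      exact fun hc => h hc.1
  rw [Finset.sum_congr rfl fun i _ => Finset.sum_congr rfl fun s _ => step1 i s]
  rw [Finset.sum_sigma', Finset.univ_sigma_univ, Finset.sum_ite_eq]
  simp only [Finset.mem_univ, if_true, Matrix.submatrix_apply]
  rcases hp : (sigEquiv L).symm r with ⟨i0, s0⟩
  rcases hq : (sigEquiv L).symm c with ⟨i1, t1⟩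
  by_cases hii : i1 = i0
  · subst hii
    have key : ∀ t : Fin (L i1), (c = encC L i1 t) ↔ t1 = t := by
      intro t
      rw [encC_eq_iff L, hq, Sigma.mk.inj_iff]
      simp
    rw [Finset.sum_congr rfl fun t _ => if_congr (key t) rfl rfl, Finset.sum_ite_eq]
    simp only [Finset.mem_univ, if_true]
    rw [Bs, Matrix.blockDiagonal'_apply_eq]
  · rw [Finset.sum_eq_zero, Bs, Matrix.blockDiagonal'_apply_ne _ _ _ (Ne.symm hii)]
    intro t _
    rw [if_neg]
    intro h
    rw [encC_eq_iff L, hq] at h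
    exact hii (congrArg Sigma.fst h)

lemma pow_merge (x : ℂ) (s t p q : ℕ) :
    ((s.descFactorial p : ℂ) * (t.descFactorial q : ℂ)) * (x ^ (s - p) * x ^ (t - q)) =
      ((s.descFactorial p : ℂ) * (t.descFactorial q : ℂ)) * x ^ (s + t - (p + q)) := by
  rcases Nat.lt_or_ge s p with hp | hp
  · rw [Nat.descFactorial_eq_zero_iff_lt.mpr hp]; simp
  rcases Nat.lt_or_ge t q with hq | hq
  · rw [Nat.descFactorial_eq_zero_iff_lt.mpr hq]; simp
  rw [← pow_add, show s - p + (t - q) = s + t - (p + q) from by omega]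

lemma desc_vandermonde (s t j : ℕ) :
    (s + t).descFactorial j =
      ∑ pq ∈ Finset.HasAntidiagonal.antidiagonal j,
        j.choose pq.1 * (s.descFactorial pq.1 * t.descFactorial pq.2) := by
  rw [Nat.descFactorial_eq_factorial_mul_choose, Nat.add_choose_eq, Finset.mul_sum]
  refine Finset.sum_congr rfl fun pq hpq => ?_
  rw [Finset.HasAntidiagonal.mem_antidiagonal] at hpq
  rw [Nat.descFactorial_eq_factorial_mul_choose, Nat.descFactorial_eq_factorial_mul_choose]
  have hfact : j.factorial = j.choose pq.1 * (pq.1.factorial * pq.2.factorial) := by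
    have h := Nat.choose_mul_factorial_mul_factorial (show pq.1 ≤ j by omega)
    rw [show j - pq.1 = pq.2 from by omega] at h
    rw [← h]; ring
  rw [hfact]; ring

lemma double_fin_sum (l : ℕ) (F : ℕ → ℕ → ℂ) :
    ∑ s' : Fin l, ∑ t' : Fin l, F (s' : ℕ) (t' : ℕ)
      = ∑ p ∈ Finset.range l, ∑ q ∈ Finset.range l, F p q :=
  calc ∑ s' : Fin l, ∑ t' : Fin l, F (s' : ℕ) (t' : ℕ)
      = ∑ s' : Fin l, ∑ q ∈ Finset.range l, F (s' : ℕ) q :=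
        Finset.sum_congr rfl fun s' _ => Fin.sum_univ_eq_sum_range (fun q => F (s' : ℕ) q) l
    _ = ∑ p ∈ Finset.range l, ∑ q ∈ Finset.range l, F p q :=
        Fin.sum_univ_eq_sum_range (fun p => ∑ q ∈ Finset.range l, F p q) l

lemma block_identity (l : ℕ) (hl : 1 ≤ l) (x : ℂ) (a : Fin l → ℂ) (s t : ℕ) :
    ∑ s' : Fin l, ∑ t' : Fin l,
      ((s.descFactorial (s' : ℕ) : ℂ) * x ^ (s - (s' : ℕ))) * magBlock l a s' t' *
        ((t.descFactorial (t' : ℕ) : ℂ) * x ^ (t - (t' : ℕ)))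
      = ∑ j : Fin l, a j * ((s + t).descFactorial (j : ℕ) : ℂ) * x ^ (s + t - (j : ℕ)) := by
  classical
  set A : ℕ → ℂ := fun m => if h : m < l then a ⟨m, h⟩ else 0 with hA
  set g : ℕ → ℕ → ℂ := fun p q =>
    (((p + q).choose p : ℂ) * A (p + q)) *
      ((s.descFactorial p : ℂ) * (t.descFactorial q : ℂ)) * x ^ (s + t - (p + q)) with hg
  have hmag : ∀ (s' t' : Fin l), magBlock l a s' t' =
      if (s' : ℕ) + (t' : ℕ) ≤ l - 1 then
        ((((s' : ℕ) + (t' : ℕ)).choose (s' : ℕ)) : ℂ) * A ((s' : ℕ) + (t' : ℕ)) else 0 := by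
    intro s' t'
    unfold magBlock
    by_cases h : (s' : ℕ) + (t' : ℕ) ≤ l - 1
    · have hlt : (s' : ℕ) + (t' : ℕ) < l := by omega
      simp [h, hA, hlt]
    · rw [dif_neg h, if_neg h]
  have hterm : ∀ p q : ℕ,
      ((s.descFactorial p : ℂ) * x ^ (s - p)) *
        (((p + q).choose p : ℂ) * A (p + q)) *
        ((t.descFactorial q : ℂ) * x ^ (t - q)) = g p q := by
    intro p q
    have h := pow_merge x s t p q
    calc ((s.descFactorial p : ℂ) * x ^ (s - p)) *
        (((p + q).choose p : ℂ) * A (p + q)) *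
        ((t.descFactorial q : ℂ) * x ^ (t - q))
        = (((p + q).choose p : ℂ) * A (p + q)) *
            (((s.descFactorial p : ℂ) * (t.descFactorial q : ℂ)) *
              (x ^ (s - p) * x ^ (t - q))) := by ring
      _ = (((p + q).choose p : ℂ) * A (p + q)) *
            (((s.descFactorial p : ℂ) * (t.descFactorial q : ℂ)) * x ^ (s + t - (p + q))) := by
          rw [h]
      _ = g p q := by rw [hg]; ring
  have lhs_eq : (∑ s' : Fin l, ∑ t' : Fin l,
      ((s.descFactorial (s' : ℕ) : ℂ) * x ^ (s - (s' : ℕ))) * magBlock l a s' t' *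
        ((t.descFactorial (t' : ℕ) : ℂ) * x ^ (t - (t' : ℕ))))
      = ∑ p ∈ Finset.range l, ∑ q ∈ Finset.range l,
          (if p + q ≤ l - 1 then g p q else 0) := by
    have step : ∀ (s' t' : Fin l),
        ((s.descFactorial (s' : ℕ) : ℂ) * x ^ (s - (s' : ℕ))) * magBlock l a s' t' *
          ((t.descFactorial (t' : ℕ) : ℂ) * x ^ (t - (t' : ℕ)))
        = (if (s' : ℕ) + (t' : ℕ) ≤ l - 1 then g (s' : ℕ) (t' : ℕ) else 0) := by
      intro s' t'
      rw [hmag]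
      by_cases h : (s' : ℕ) + (t' : ℕ) ≤ l - 1
      · rw [if_pos h]
        simp only [h, if_true]
        exact hterm _ _
      · rw [if_neg h]
        simp only [h, if_false, mul_zero, zero_mul]
    rw [Finset.sum_congr rfl fun s' _ => Finset.sum_congr rfl fun t' _ => step s' t']
    exact double_fin_sum l (fun p q => if p + q ≤ l - 1 then g p q else 0)
  have rhs_eq : (∑ j : Fin l, a j * ((s + t).descFactorial (j : ℕ) : ℂ) * x ^ (s + t - (j : ℕ)))
      = ∑ j ∈ Finset.range l, ∑ pq ∈ Finset.HasAntidiagonal.antidiagonal j, g pq.1 pq.2 := by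
    have haj : ∀ j : Fin l, a j = A (j : ℕ) := by
      intro j
      rw [hA]
      simp only [j.isLt, dif_pos]
    rw [Finset.sum_congr rfl fun j (_ : j ∈ Finset.univ) =>
      (by rw [haj] :
        a j * ((s + t).descFactorial (j : ℕ) : ℂ) * x ^ (s + t - (j : ℕ))
          = A (j : ℕ) * ((s + t).descFactorial (j : ℕ) : ℂ) * x ^ (s + t - (j : ℕ)))]
    rw [show (∑ j : Fin l, A (j : ℕ) * ((s + t).descFactorial (j : ℕ) : ℂ) * x ^ (s + t - (j : ℕ)))
        = ∑ j ∈ Finset.range l, A j * ((s + t).descFactorial j : ℂ) * x ^ (s + t - j) from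
      Fin.sum_univ_eq_sum_range (fun j => A j * ((s + t).descFactorial j : ℂ) * x ^ (s + t - j)) l]
    refine Finset.sum_congr rfl fun j _ => ?_
    have hd : ((s + t).descFactorial j : ℂ)
        = ∑ pq ∈ Finset.HasAntidiagonal.antidiagonal j,
            (j.choose pq.1 : ℂ) * ((s.descFactorial pq.1 : ℂ) * (t.descFactorial pq.2 : ℂ)) := by
      rw [show ((s + t).descFactorial j : ℂ)
          = ((∑ pq ∈ Finset.HasAntidiagonal.antidiagonal j,
              j.choose pq.1 * (s.descFactorial pq.1 * t.descFactorial pq.2) : ℕ) : ℂ) from by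
        rw [← desc_vandermonde]]
      push_cast
      rfl
    rw [hd, Finset.mul_sum, Finset.sum_mul]
    refine Finset.sum_congr rfl fun pq hpq => ?_
    rw [Finset.HasAntidiagonal.mem_antidiagonal] at hpq
    rw [hg]
    simp only [← hpq]
    ring
  rw [lhs_eq, rhs_eq]
  rw [← Finset.sum_product', ← Finset.sum_filter]
  have hset : Finset.filter (fun pq : ℕ × ℕ => pq.1 + pq.2 ≤ l - 1)
        (Finset.range l ×ˢ Finset.range l)
      = (Finset.range l).biUnion (fun j => Finset.HasAntidiagonal.antidiagonal j) := by
    ext ⟨p, q⟩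
    simp only [Finset.mem_filter, Finset.mem_product, Finset.mem_range, Finset.mem_biUnion,
      Finset.HasAntidiagonal.mem_antidiagonal]
    constructor
    · rintro ⟨⟨hp, hq⟩, hle⟩
      exact ⟨p + q, by omega, rfl⟩
    · rintro ⟨j, hj, rfl⟩
      omega
  rw [hset, Finset.sum_biUnion]
  intro j1 _ j2 _ hne
  simp only [Function.onFun]
  rw [Finset.disjoint_left]
  rintro ⟨p, q⟩ h1 h2
  rw [Finset.HasAntidiagonal.mem_antidiagonal] at h1 h2
  exact hne (h1 ▸ h2)

lemma hankel_factor {n : ℕ} (l : Fin n → ℕ) (hl : ∀ i, 1 ≤ l i) (ξ : Fin n → ℂ)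
    (a : (i : Fin n) → Fin (l i) → ℂ) :
    pronyHankel l ξ a = confVand l ξ * magBlockMat l a * (confVand l ξ)ᵀ := by
  rw [confVand_eq, magBlockMat_eq, Matrix.transpose_submatrix, Matrix.submatrix_mul_equiv,
    Matrix.submatrix_mul_equiv, Matrix.submatrix_id_id]
  funext s t
  show pronyMoment l ξ a ((s : ℕ) + (t : ℕ)) = (Vs l ξ * Bs l a * (Vs l ξ)ᵀ) s t
  rw [Matrix.mul_apply]
  simp_rw [Matrix.mul_apply, Matrix.transpose_apply, Finset.sum_mul]
  rw [Finset.sum_comm]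
  rw [show (Finset.univ : Finset ((i : Fin n) × Fin (l i)))
      = (Finset.univ : Finset (Fin n)).sigma (fun i => (Finset.univ : Finset (Fin (l i)))) from
    (Finset.univ_sigma_univ).symm, Finset.sum_sigma]
  show pronyMoment l ξ a ((s : ℕ) + (t : ℕ)) = ∑ i, ∑ s' : Fin (l i), ∑ q, _
  unfold pronyMoment
  refine Finset.sum_congr rfl fun i _ => ?_
  have inner : ∀ s' : Fin (l i),
      (∑ q : (i' : Fin n) × Fin (l i'),
        Vs l ξ s ⟨i, s'⟩ * Bs l a ⟨i, s'⟩ q * Vs l ξ t q)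
      = ∑ t' : Fin (l i),
          Vs l ξ s ⟨i, s'⟩ * magBlock (l i) (a i) s' t' * Vs l ξ t ⟨i, t'⟩ := by
    intro s'
    rw [show (Finset.univ : Finset ((i : Fin n) × Fin (l i)))
        = (Finset.univ : Finset (Fin n)).sigma (fun i => (Finset.univ : Finset (Fin (l i)))) from
      (Finset.univ_sigma_univ).symm, Finset.sum_sigma]
    rw [Finset.sum_eq_single i]
    · refine Finset.sum_congr rfl fun t' _ => ?_
      rw [Bs, Matrix.blockDiagonal'_apply_eq]
    · intro i' _ hne
      refine Finset.sum_eq_zero fun t' _ => ?_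
      rw [Bs, Matrix.blockDiagonal'_apply_ne _ _ _ (Ne.symm hne), mul_zero, zero_mul]
    · intro h
      exact absurd (Finset.mem_univ i) h
  rw [Finset.sum_congr rfl fun s' _ => inner s']
  exact (block_identity (l i) (hl i) (ξ i) (a i) (s : ℕ) (t : ℕ)).symm

lemma confVand_apply_encC (ξ : Fin n → ℂ) (k : Fin (∑ i, L i)) (i : Fin n) (j : Fin (L i)) :
    confVand L ξ k (encC L i j)
      = ((k : ℕ).descFactorial (j : ℕ) : ℂ) * ξ i ^ ((k : ℕ) - (j : ℕ)) := by
  rw [confVand_eq]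
  show Vs L ξ k ((sigEquiv L).symm (encC L i j)) = _
  rw [show encC L i j = sigEquiv L ⟨i, j⟩ from rfl, Equiv.symm_apply_apply]
  rfl

lemma confVand_det_eq_zero (hl : ∀ i, 1 ≤ L i) {ξ : Fin n → ℂ} {i i' : Fin n}
    (hne : i ≠ i') (hxi : ξ i = ξ i') : (confVand L ξ).det = 0 := by
  apply Matrix.det_zero_of_column_eq
    (i := encC L i ⟨0, hl i⟩) (j := encC L i' ⟨0, hl i'⟩)
  · intro h
    have h2 := sigEnc_injective L
      (show sigEnc L ⟨i, ⟨0, hl i⟩⟩ = sigEnc L ⟨i', ⟨0, hl i'⟩⟩ from h)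
    exact hne (congrArg Sigma.fst h2)
  · intro k
    rw [confVand_apply_encC, confVand_apply_encC]
    simp [hxi]

lemma confVand_det_ne_zero {ξ : Fin n → ℂ} (hl : ∀ i, 1 ≤ L i) (hC : 1 ≤ ∑ i, L i)
    (hd : ∀ i j : Fin n, i ≠ j → ξ i ≠ ξ j) : (confVand L ξ).det ≠ 0 := by
  intro h0
  obtain ⟨v, hv, hvM⟩ := Matrix.exists_vecMul_eq_zero_iff.mpr h0
  set P : Polynomial ℂ := ∑ k : Fin (∑ i, L i), Polynomial.C (v k) * Polynomial.X ^ (k : ℕ)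
    with hP
  have hcoeff : ∀ k : Fin (∑ i, L i), P.coeff (k : ℕ) = v k := by
    intro k0
    rw [hP, Polynomial.finset_sum_coeff]
    simp_rw [Polynomial.coeff_C_mul, Polynomial.coeff_X_pow]
    rw [Finset.sum_eq_single k0]
    · simp
    · intro k _ hne
      rw [if_neg, mul_zero]
      exact fun h => hne (Fin.ext h.symm)
    · intro h
      exact absurd (Finset.mem_univ k0) h
  have hP0 : P ≠ 0 := by
    obtain ⟨k0, hk0⟩ := Function.ne_iff.mp hv
    intro h
    apply hk0
    rw [show v k0 = P.coeff (k0 : ℕ) from (hcoeff k0).symm, h, Polynomial.coeff_zero]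
    rfl
  have hder : ∀ (i : Fin n) (m : ℕ), m < L i →
      (Polynomial.derivative^[m] P).eval (ξ i) = 0 := by
    intro i m hm
    have hcol : ∑ k, v k * confVand L ξ k (encC L i ⟨m, hm⟩) = 0 := by
      have h1 := congrFun hvM (encC L i ⟨m, hm⟩)
      simpa [Matrix.vecMul, dotProduct] using h1
    have hPev : (Polynomial.derivative^[m] P).eval (ξ i)
        = ∑ k : Fin (∑ i, L i),
            v k * (((k : ℕ).descFactorial m : ℂ) * ξ i ^ ((k : ℕ) - m)) := by
      rw [hP, Polynomial.iterate_derivative_sum, Polynomial.eval_finset_sum]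
      refine Finset.sum_congr rfl fun k _ => ?_
      rw [Polynomial.iterate_derivative_C_mul, Polynomial.iterate_derivative_X_pow_eq_smul]
      simp only [Polynomial.eval_mul, Polynomial.eval_C, Polynomial.eval_smul,
        Polynomial.eval_pow, Polynomial.eval_X, smul_eq_mul]
    calc (Polynomial.derivative^[m] P).eval (ξ i)
        = ∑ k : Fin (∑ i, L i),
            v k * (((k : ℕ).descFactorial m : ℂ) * ξ i ^ ((k : ℕ) - m)) := hPev
      _ = ∑ k, v k * confVand L ξ k (encC L i ⟨m, hm⟩) :=
          Finset.sum_congr rfl fun k _ => by rw [confVand_apply_encC L ξ k i ⟨m, hm⟩]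
      _ = 0 := hcol
  have hdvd : ∀ i, (Polynomial.X - Polynomial.C (ξ i)) ^ (L i) ∣ P := by
    intro i
    have h1 : L i - 1 < P.rootMultiplicity (ξ i) := by
      rw [Polynomial.lt_rootMultiplicity_iff_isRoot_iterate_derivative_of_mem_nonZeroDivisors hP0
        (mem_nonZeroDivisors_of_ne_zero (by
          exact_mod_cast (Nat.cast_ne_zero (R := ℂ)).mpr (Nat.factorial_ne_zero (L i - 1))))]
      intro m hm
      exact hder i m (by have := hl i; omega)
    exact dvd_trans (pow_dvd_pow _ (by omega)) (Polynomial.pow_rootMultiplicity_dvd P (ξ i))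
  have hinj : Function.Injective ξ := by
    intro i j h
    by_contra hne
    exact hd i j hne h
  have hprod : (∏ i, (Polynomial.X - Polynomial.C (ξ i)) ^ (L i)) ∣ P :=
    Fintype.prod_dvd_of_coprime
      (fun i j hij => ((Polynomial.pairwise_coprime_X_sub_C hinj) hij).pow)
      (fun i => hdvd i)
  have hdeg1 : (∏ i, (Polynomial.X - Polynomial.C (ξ i)) ^ (L i)).natDegree = ∑ i, L i := by
    rw [Polynomial.natDegree_prod]
    · refine Finset.sum_congr rfl fun i _ => ?_
      rw [Polynomial.natDegree_pow, Polynomial.natDegree_X_sub_C, mul_one]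
    · intro i _
      exact pow_ne_zero _ (Polynomial.X_sub_C_ne_zero (ξ i))
  have hdeg2 : P.natDegree ≤ (∑ i, L i) - 1 := by
    rw [hP]
    refine Polynomial.natDegree_sum_le_of_forall_le _ _ fun k _ => ?_
    refine le_trans (Polynomial.natDegree_C_mul_le _ _) ?_
    rw [Polynomial.natDegree_X_pow]
    have := k.isLt
    omega
  have := Polynomial.natDegree_le_of_dvd hprod hP0
  omega

/-- The permutation of flat indices reversing each block. -/
def colRev : Equiv.Perm (Fin (∑ i, L i)) :=
  (sigEquiv L).symm.trans
    ((Equiv.sigmaCongrRight fun i => (Fin.revPerm : Equiv.Perm (Fin (L i)))).trans (sigEquiv L))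

lemma symm_colRev (c : Fin (∑ i, L i)) :
    (sigEquiv L).symm (colRev L c)
      = ⟨((sigEquiv L).symm c).1, Fin.rev ((sigEquiv L).symm c).2⟩ := by
  show (sigEquiv L).symm
      (sigEquiv L ((Equiv.sigmaCongrRight fun i => (Fin.revPerm : Equiv.Perm (Fin (L i))))
        ((sigEquiv L).symm c))) = _
  rw [Equiv.symm_apply_apply]
  rcases (sigEquiv L).symm c with ⟨i, t⟩
  rfl

lemma val_sigEquiv (p : (i : Fin n) × Fin (L i)) :
    ((sigEquiv L p : Fin (∑ i, L i)) : ℕ) = blockOff L p.1 + (p.2 : ℕ) := rfl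

lemma triangular (a : (i : Fin n) → Fin (L i) → ℂ) :
    ((magBlockMat L a).submatrix id (colRev L)).BlockTriangular id := by
  intro r c hlt
  show magBlockMat L a (id r) (colRev L c) = 0
  rw [magBlockMat_eq]
  show Bs L a ((sigEquiv L).symm r) ((sigEquiv L).symm (colRev L c)) = 0
  rw [symm_colRev]
  have hr : (r : ℕ) = blockOff L ((sigEquiv L).symm r).1 + (((sigEquiv L).symm r).2 : ℕ) := by
    conv_lhs => rw [← Equiv.apply_symm_apply (sigEquiv L) r]
    exact val_sigEquiv L _
  have hc : (c : ℕ) = blockOff L ((sigEquiv L).symm c).1 + (((sigEquiv L).symm c).2 : ℕ) := by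
    conv_lhs => rw [← Equiv.apply_symm_apply (sigEquiv L) c]
    exact val_sigEquiv L _
  rcases hp : (sigEquiv L).symm r with ⟨i, s⟩
  rcases hq : (sigEquiv L).symm c with ⟨i', t⟩
  rw [hp] at hr
  rw [hq] at hc
  dsimp only at hr hc
  by_cases hii : i = i'
  · subst hii
    show Bs L a ⟨i, s⟩ ⟨i, Fin.rev t⟩ = 0
    rw [Bs, Matrix.blockDiagonal'_apply_eq]
    unfold magBlock
    rw [dif_neg]
    have h1 := t.isLt
    have h2 := s.isLt
    have hlt' : (c : ℕ) < (r : ℕ) := hlt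
    rw [Fin.val_rev]
    omega
  · exact Matrix.blockDiagonal'_apply_ne _ _ _ hii

lemma diag_val (a : (i : Fin n) → Fin (L i) → ℂ) (hl : ∀ i, 1 ≤ L i)
    (i : Fin n) (s : Fin (L i)) :
    ((magBlockMat L a).submatrix id (colRev L)) (sigEquiv L ⟨i, s⟩) (sigEquiv L ⟨i, s⟩)
      = (((L i - 1).choose (s : ℕ)) : ℂ) * a i ⟨L i - 1, Nat.sub_lt (hl i) Nat.one_pos⟩ := by
  show magBlockMat L a (id (sigEquiv L ⟨i, s⟩)) (colRev L (sigEquiv L ⟨i, s⟩)) = _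
  rw [magBlockMat_eq]
  show Bs L a ((sigEquiv L).symm (sigEquiv L ⟨i, s⟩))
      ((sigEquiv L).symm (colRev L (sigEquiv L ⟨i, s⟩))) = _
  rw [symm_colRev, Equiv.symm_apply_apply]
  show Bs L a ⟨i, s⟩ ⟨i, Fin.rev s⟩ = _
  rw [Bs, Matrix.blockDiagonal'_apply_eq]
  unfold magBlock
  have hsr : (s : ℕ) + ((Fin.rev s : Fin (L i)) : ℕ) = L i - 1 := by
    have := s.isLt
    rw [Fin.val_rev]
    omega
  rw [dif_pos (le_of_eq hsr)]
  congr 1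
  · rw [hsr]
  · exact congrArg (a i) (Fin.ext hsr)

lemma magBlockMat_det_ne_zero_iff (hl : ∀ i, 1 ≤ L i) (a : (i : Fin n) → Fin (L i) → ℂ) :
    (magBlockMat L a).det ≠ 0 ↔
      ∀ i, a i ⟨L i - 1, Nat.sub_lt (hl i) Nat.one_pos⟩ ≠ 0 := by
  have hdetN := Matrix.det_of_upperTriangular (triangular L a)
  have hperm := Matrix.det_permute' (colRev L) (magBlockMat L a)
  have key : (magBlockMat L a).det ≠ 0 ↔
      ∀ r, ((magBlockMat L a).submatrix id (colRev L)) r r ≠ 0 := by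
    constructor
    · intro h r
      have hprod : (∏ r, ((magBlockMat L a).submatrix id (colRev L)) r r) ≠ 0 := by
        rw [← hdetN, hperm]
        rcases Int.units_eq_one_or (Equiv.Perm.sign (colRev L)) with hs | hs <;>
          rw [hs] <;> simpa using h
      exact Finset.prod_ne_zero_iff.mp hprod r (Finset.mem_univ r)
    · intro h h0
      have hprod : (∏ r, ((magBlockMat L a).submatrix id (colRev L)) r r) = 0 := by
        rw [← hdetN, hperm, h0, mul_zero]
      obtain ⟨r, _, hr⟩ := Finset.prod_eq_zero_iff.mp hprod
      exact h r hr
  rw [key]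
  constructor
  · intro h i
    have := h (sigEquiv L ⟨i, ⟨0, hl i⟩⟩)
    rw [diag_val L a hl i ⟨0, hl i⟩] at this
    simpa using this
  · intro h r
    obtain ⟨⟨i, s⟩, rfl⟩ := (sigEquiv L).surjective r
    rw [diag_val L a hl i s]
    refine mul_ne_zero ?_ (h i)
    have hs := s.isLt
    have hc : ((L i - 1).choose (s : ℕ)) ≠ 0 :=
      (Nat.choose_pos (show (s : ℕ) ≤ L i - 1 by omega)).ne'
    exact Nat.cast_ne_zero.mpr hc

end PronyAux

theorem pronyHankel_invertible_iff
    (n : ℕ) (hn : 1 ≤ n) (l : Fin n → ℕ) (hl : ∀ i, 1 ≤ l i)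
    (ξ : Fin n → ℂ) (a : (i : Fin n) → Fin (l i) → ℂ) :
    IsUnit (pronyHankel l ξ a) ↔
      (∀ i j : Fin n, i ≠ j → ξ i ≠ ξ j) ∧
        ∀ i, a i ⟨l i - 1, by have := hl i; omega⟩ ≠ 0 := by
  classical
  have hC : 1 ≤ ∑ i, l i := by
    have h0 : l ⟨0, hn⟩ ≤ ∑ i, l i :=
      Finset.single_le_sum (fun i _ => Nat.zero_le _) (Finset.mem_univ _)
    have := hl ⟨0, hn⟩
    omega
  rw [Matrix.isUnit_iff_isUnit_det, PronyAux.hankel_factor l hl ξ a, Matrix.det_mul,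
    Matrix.det_mul, Matrix.det_transpose, isUnit_iff_ne_zero, mul_ne_zero_iff, mul_ne_zero_iff]
  constructor
  · rintro ⟨⟨hV, hB⟩, -⟩
    refine ⟨fun i j hij hxi => hV (PronyAux.confVand_det_eq_zero l hl hij hxi), ?_⟩
    exact (PronyAux.magBlockMat_det_ne_zero_iff l hl a).mp hB
  · rintro ⟨hdist, htop⟩
    have hV := PronyAux.confVand_det_ne_zero l hl hC hdist
    exact ⟨⟨hV, (PronyAux.magBlockMat_det_ne_zero_iff l hl a).mpr htop⟩, hV⟩
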